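/- Let (b,a) be an n-good pair with s = s(n). Then a pair (b',a') of positive integers is n-good if and only if there exists an integer k such that a' = a + k·f_{s-2} and b' = b - k·f_{s-1}. -/
import Mathlib


def reaches (n : ℤ) (s : ℕ) : Prop :=
  ∃ a b : ℤ, 1 ≤ a ∧ 1 ≤ b ∧ n = a * (Nat.fib (s - 1) : ℤ) + b * (Nat.fib (s - 2) : ℤ)

def isSlow (n : ℤ) (s : ℕ) : Prop :=
  reaches n s ∧ ∀ s', reaches n s' → s' ≤ s

/-- The pair `(b, a)` is `n`-good (for the slow step count `s = s(n)`). -/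
def isGood (n : ℤ) (s : ℕ) (b a : ℤ) : Prop :=
  1 ≤ a ∧ 1 ≤ b ∧ n = a * (Nat.fib (s - 1) : ℤ) + b * (Nat.fib (s - 2) : ℤ)

theorem stmt3 (n : ℤ) (hn : 2 ≤ n) (s : ℕ) (hs : isSlow n s)
    (a b : ℤ) (h : isGood n s b a) (a' b' : ℤ) (ha' : 1 ≤ a') (hb' : 1 ≤ b') :
    isGood n s b' a' ↔
      ∃ k : ℤ, a' = a + k * (Nat.fib (s - 2) : ℤ) ∧ b' = b - k * (Nat.fib (s - 1) : ℤ) := by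
  have h3 : 3 ≤ s := by
    apply hs.2 3
    refine ⟨n - 1, 1, by omega, le_refl 1, ?_⟩
    norm_num [Nat.fib]
  obtain ⟨m, rfl⟩ : ∃ m, s = m + 3 := ⟨s - 3, by omega⟩
  simp only [show m + 3 - 2 = m + 1 from rfl, show m + 3 - 1 = m + 2 from rfl,
    isGood] at h ⊢
  have hF0 : (0 : ℤ) < (Nat.fib (m + 1) : ℤ) := by
    exact_mod_cast Nat.fib_pos.mpr (Nat.succ_pos m)
  have hcop : IsCoprime ((Nat.fib (m + 1) : ℤ)) ((Nat.fib (m + 2) : ℤ)) := by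
    rw [Int.isCoprime_iff_gcd_eq_one]
    simpa using Nat.fib_coprime_fib_succ (m + 1)
  obtain ⟨ha, hb, heq⟩ := h
  constructor
  · rintro ⟨_, _, heq'⟩
    have key : (a' - a) * (Nat.fib (m + 2) : ℤ) = (Nat.fib (m + 1) : ℤ) * (b - b') := by
      linarith
    obtain ⟨k, hk⟩ : (Nat.fib (m + 1) : ℤ) ∣ (a' - a) :=
      hcop.dvd_of_dvd_mul_right ⟨b - b', key⟩
    refine ⟨k, by linarith [hk], ?_⟩
    have h2 : (Nat.fib (m + 1) : ℤ) * (k * (Nat.fib (m + 2) : ℤ))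
        = (Nat.fib (m + 1) : ℤ) * (b - b') := by rw [← key, hk]; ring
    have := mul_left_cancel₀ hF0.ne' h2
    linarith
  · rintro ⟨k, rfl, rfl⟩
    refine ⟨ha', hb', by linarith [heq]⟩
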